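/- arXiv:2105.02013 — 4 statements merged into one kernel-verified Lean document; each statement's English description precedes it below -/
import Mathlib

section
/- For every HyperLTL sentence ψ over a finite alphabet X there exists a trace-prefixed hypertrace sentence φ over X such that for every set T of infinite traces over X: T ⊨_H ψ if and only if T ⊨ φ. -/
/-- LTL formulas over an alphabet `A`. -/
inductive LTL (A : Type) : Type where
  | atom : A → LTL A
  | not  : LTL A → LTL A
  | or   : LTL A → LTL A → LTL A
  | next : LTL A → LTL A
  | untl : LTL A → LTL A → LTL A

/-- LTL satisfaction over an infinite trace. -/
def LTL.Sat {A : Type} : (ℕ → A → Bool) → LTL A → Prop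
  | τ, .atom a   => τ 0 a = true
  | τ, .not φ    => ¬ LTL.Sat τ φ
  | τ, .or φ ψ   => LTL.Sat τ φ ∨ LTL.Sat τ ψ
  | τ, .next φ   => LTL.Sat (fun n => τ (n + 1)) φ
  | τ, .untl φ ψ => ∃ j, LTL.Sat (fun n => τ (n + j)) ψ ∧
      ∀ j' < j, LTL.Sat (fun n => τ (n + j')) φ

/-- HyperLTL formulas over alphabet `X`, trace variables are natural numbers;
the quantifier-free part is an LTL formula over atoms `a_π = (a, π)`. -/
inductive HyperLTL (X : Type) : Type where
  | ex  : ℕ → HyperLTL X → HyperLTL X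
  | all : ℕ → HyperLTL X → HyperLTL X
  | qf  : LTL (X × ℕ) → HyperLTL X

/-- HyperLTL satisfaction of a quantifier-free formula by a partial trace
assignment over `T` at time `i`. -/
def HSatQF {X : Type} {T : Set (ℕ → X → Bool)} (Θ : ℕ → Option ↥T) : ℕ → LTL (X × ℕ) → Prop
  | i, .atom p   => ∃ τ : ↥T, Θ p.2 = some τ ∧ τ.1 i p.1 = true
  | i, .not φ    => ¬ HSatQF Θ i φ
  | i, .or φ ψ   => HSatQF Θ i φ ∨ HSatQF Θ i ψ
  | i, .next φ   => HSatQF Θ (i + 1) φ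
  | i, .untl φ ψ => ∃ j, i ≤ j ∧ HSatQF Θ j ψ ∧ ∀ j', i ≤ j' → j' < j → HSatQF Θ j' φ

/-- HyperLTL satisfaction: quantifiers range over `T`. -/
def HSat {X : Type} {T : Set (ℕ → X → Bool)} : (ℕ → Option ↥T) → ℕ → HyperLTL X → Prop
  | Θ, i, .ex π ψ  => ∃ τ : ↥T, HSat (Function.update Θ π (some τ)) i ψ
  | Θ, i, .all π ψ => ∀ τ : ↥T, HSat (Function.update Θ π (some τ)) i ψ
  | Θ, i, .qf φ    => HSatQF Θ i φ

/-- `T ⊨_H ψ` : satisfaction from the empty trace assignment at time 0. -/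
def HModels {X : Type} (T : Set (ℕ → X → Bool)) (ψ : HyperLTL X) : Prop :=
  HSat (T := T) (fun _ => none) 0 ψ

/-- Trace variables occurring in a quantifier-free HyperLTL formula. -/
def LTL.tvars {X : Type} : LTL (X × ℕ) → Finset ℕ
  | .atom p   => {p.2}
  | .not φ    => φ.tvars
  | .or φ ψ   => φ.tvars ∪ ψ.tvars
  | .next φ   => φ.tvars
  | .untl φ ψ => φ.tvars ∪ ψ.tvars

/-- Free trace variables of a HyperLTL formula. -/
def HyperLTL.free {X : Type} : HyperLTL X → Finset ℕ
  | .ex π ψ  => ψ.free.erase π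
  | .all π ψ => ψ.free.erase π
  | .qf φ    => φ.tvars

/-- A HyperLTL sentence has no free trace variables. -/
def HyperLTL.Closed {X : Type} (ψ : HyperLTL X) : Prop := ψ.free = ∅

/-- Time-part of trace-prefixed hypertrace formulas:
`ψ ::= ∀i.ψ | ψ∨ψ | ¬ψ | i<i' | i=i' | a(π,i)` (time variables and trace
variables are natural numbers). -/
inductive TIn (X : Type) : Type where
  | allT : ℕ → TIn X → TIn X
  | or   : TIn X → TIn X → TIn X
  | not  : TIn X → TIn X
  | lt   : ℕ → ℕ → TIn X
  | eq   : ℕ → ℕ → TIn X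
  | atom : X → ℕ → ℕ → TIn X

/-- Trace-prefixed hypertrace formulas: `φ ::= ∀π.φ | ¬φ | ψ`. -/
inductive TPr (X : Type) : Type where
  | allTr : ℕ → TPr X → TPr X
  | not   : TPr X → TPr X
  | inner : TIn X → TPr X

/-- Satisfaction of the time part, w.r.t. a time environment `te` and a trace
environment `pe`; time quantifiers range over `ℕ`. -/
def TIn.Sat {X : Type} : (ℕ → ℕ) → (ℕ → (ℕ → X → Bool)) → TIn X → Prop
  | te, pe, .allT i ψ   => ∀ n : ℕ, TIn.Sat (Function.update te i n) pe ψ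
  | te, pe, .or ψ₁ ψ₂   => TIn.Sat te pe ψ₁ ∨ TIn.Sat te pe ψ₂
  | te, pe, .not ψ      => ¬ TIn.Sat te pe ψ
  | te, _,  .lt i j     => te i < te j
  | te, _,  .eq i j     => te i = te j
  | te, pe, .atom a π i => pe π (te i) a = true

/-- Satisfaction of a trace-prefixed formula; trace quantifiers range over `T`. -/
def TPr.Sat {X : Type} (T : Set (ℕ → X → Bool)) (te : ℕ → ℕ) :
    (ℕ → (ℕ → X → Bool)) → TPr X → Prop
  | pe, .allTr π φ => ∀ τ ∈ T, TPr.Sat T te (Function.update pe π τ) φ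
  | pe, .not φ     => ¬ TPr.Sat T te pe φ
  | pe, .inner ψ   => TIn.Sat te pe ψ

/-- Free time variables of the time part. -/
def TIn.freeTime {X : Type} : TIn X → Finset ℕ
  | .allT i ψ   => ψ.freeTime.erase i
  | .or ψ₁ ψ₂   => ψ₁.freeTime ∪ ψ₂.freeTime
  | .not ψ      => ψ.freeTime
  | .lt i j     => {i, j}
  | .eq i j     => {i, j}
  | .atom _ _ i => {i}

/-- Free trace variables of the time part. -/
def TIn.freeTr {X : Type} : TIn X → Finset ℕ
  | .allT _ ψ   => ψ.freeTr
  | .or ψ₁ ψ₂   => ψ₁.freeTr ∪ ψ₂.freeTr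
  | .not ψ      => ψ.freeTr
  | .lt _ _     => ∅
  | .eq _ _     => ∅
  | .atom _ π _ => {π}

/-- Free time variables of a trace-prefixed formula. -/
def TPr.freeTime {X : Type} : TPr X → Finset ℕ
  | .allTr _ φ => φ.freeTime
  | .not φ     => φ.freeTime
  | .inner ψ   => ψ.freeTime

/-- Free trace variables of a trace-prefixed formula. -/
def TPr.freeTr {X : Type} : TPr X → Finset ℕ
  | .allTr π φ => φ.freeTr.erase π
  | .not φ     => φ.freeTr
  | .inner ψ   => ψ.freeTr

/-- A trace-prefixed hypertrace sentence: no free variables of either sort. -/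
def TPr.Closed {X : Type} (φ : TPr X) : Prop := φ.freeTime = ∅ ∧ φ.freeTr = ∅

/-- `T ⊨ φ` for a (closed) trace-prefixed hypertrace formula. -/
def TPr.Models {X : Type} (T : Set (ℕ → X → Bool)) (φ : TPr X) : Prop :=
  ∀ (te : ℕ → ℕ) (pe : ℕ → (ℕ → X → Bool)), TPr.Sat T te pe φ
/- ===== Auxiliary translation ===== -/

section Translation

variable {X : Type}

/-- conjunction in the time fragment -/
def tand (a b : TIn X) : TIn X := .not (.or (.not a) (.not b))

/-- `i ≤ j` in the time fragment -/
def tle (i j : ℕ) : TIn X := .or (.lt i j) (.eq i j)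

lemma sat_allT {te pe} {i : ℕ} {ψ : TIn X} :
    TIn.Sat te pe (.allT i ψ) ↔ ∀ n : ℕ, TIn.Sat (Function.update te i n) pe ψ := Iff.rfl
lemma sat_or {te pe} {a b : TIn X} :
    TIn.Sat te pe (.or a b) ↔ TIn.Sat te pe a ∨ TIn.Sat te pe b := Iff.rfl
lemma sat_not {te pe} {a : TIn X} :
    TIn.Sat te pe (.not a) ↔ ¬ TIn.Sat te pe a := Iff.rfl
lemma sat_lt {te pe} {i j : ℕ} :
    TIn.Sat te pe (.lt i j : TIn X) ↔ te i < te j := Iff.rfl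
lemma sat_atomT {te pe} {a : X} {π i : ℕ} :
    TIn.Sat te pe (.atom a π i) ↔ pe π (te i) a = true := Iff.rfl

lemma sat_tand {te pe} {a b : TIn X} :
    TIn.Sat te pe (tand a b) ↔ TIn.Sat te pe a ∧ TIn.Sat te pe b := by
  simp only [tand, sat_not, sat_or]; tauto

lemma sat_tle {te pe} {i j : ℕ} :
    TIn.Sat te pe (tle i j : TIn X) ↔ te i ≤ te j := by
  simp only [tle, sat_or]
  show te i < te j ∨ te i = te j ↔ _
  omega

lemma satP_allTr {T : Set (ℕ → X → Bool)} {te pe} {π : ℕ} {φ : TPr X} :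
    TPr.Sat T te pe (.allTr π φ) ↔
      ∀ τ ∈ T, TPr.Sat T te (Function.update pe π τ) φ := Iff.rfl
lemma satP_not {T : Set (ℕ → X → Bool)} {te pe} {φ : TPr X} :
    TPr.Sat T te pe (.not φ) ↔ ¬ TPr.Sat T te pe φ := Iff.rfl
lemma satP_inner {T : Set (ℕ → X → Bool)} {te pe} {ψ : TIn X} :
    TPr.Sat T te pe (.inner ψ) ↔ TIn.Sat te pe ψ := Iff.rfl

/-- translation of the quantifier-free part; `i` is the current time variable,
fresh time variables are taken from `c, c+1, …` (invariant `i < c`). -/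
def transQF : LTL (X × ℕ) → ℕ → ℕ → TIn X
  | .atom p, i, _ => .atom p.1 p.2 i
  | .not φ, i, c => .not (transQF φ i c)
  | .or φ ψ, i, c => .or (transQF φ i c) (transQF ψ i c)
  | .next φ, i, c =>
      .allT c (.or (.not (tand (.lt i c)
        (.allT (c+1) (.not (tand (.lt i (c+1)) (.lt (c+1) c))))))
        (transQF φ c (c+2)))
  | .untl φ ψ, i, c =>
      .not (.allT c (.not (tand (tle i c)
        (tand (transQF ψ c (c+2))
          (.allT (c+1) (.or (.not (tand (tle i (c+1)) (.lt (c+1) c)))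
            (transQF φ (c+1) (c+2))))))))

lemma freeTime_transQF : ∀ (φ : LTL (X × ℕ)) (i c : ℕ), i < c →
    (transQF φ i c).freeTime ⊆ {i}
  | .atom p, i, c, _ => by simp [transQF, TIn.freeTime]
  | .not φ, i, c, h => freeTime_transQF φ i c h
  | .or φ ψ, i, c, h => by
      simp only [transQF, TIn.freeTime, Finset.union_subset_iff]
      exact ⟨freeTime_transQF φ i c h, freeTime_transQF ψ i c h⟩
  | .next φ, i, c, h => by
      intro x hx
      have H := freeTime_transQF φ c (c+2) (by omega)
      simp only [transQF, TIn.freeTime, tand, Finset.mem_erase, Finset.mem_union,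
        Finset.mem_insert, Finset.mem_singleton] at hx ⊢
      obtain ⟨hne, hx⟩ := hx
      rcases hx with (hx | hx)
      · omega
      · have := H hx; simp only [Finset.mem_singleton] at this; omega
  | .untl φ ψ, i, c, h => by
      intro x hx
      have Hφ := freeTime_transQF φ (c+1) (c+2) (by omega)
      have Hψ := freeTime_transQF ψ c (c+2) (by omega)
      simp only [transQF, TIn.freeTime, tand, tle, Finset.mem_erase, Finset.mem_union,
        Finset.mem_insert, Finset.mem_singleton] at hx ⊢
      obtain ⟨hne, hx⟩ := hx
      rcases hx with ((hx | hx) | (hx | hx))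
      · omega
      · omega
      · have := Hψ hx; simp only [Finset.mem_singleton] at this; omega
      · obtain ⟨hne2, hx⟩ := hx
        rcases hx with ((hx | hx) | hx)
        · omega
        · omega
        · have := Hφ hx; simp only [Finset.mem_singleton] at this; omega

lemma freeTr_transQF : ∀ (φ : LTL (X × ℕ)) (i c : ℕ),
    (transQF φ i c).freeTr ⊆ φ.tvars
  | .atom p, i, c => by simp [transQF, TIn.freeTr, LTL.tvars]
  | .not φ, i, c => freeTr_transQF φ i c
  | .or φ ψ, i, c => by
      simp only [transQF, TIn.freeTr, LTL.tvars]
      exact Finset.union_subset_union (freeTr_transQF φ i c) (freeTr_transQF ψ i c)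
  | .next φ, i, c => by
      simpa [transQF, TIn.freeTr, tand, LTL.tvars] using freeTr_transQF φ c (c+2)
  | .untl φ ψ, i, c => by
      simp only [transQF, TIn.freeTr, tand, tle, LTL.tvars, Finset.empty_union,
        Finset.union_empty]
      exact Finset.union_subset
        ((freeTr_transQF ψ c (c+2)).trans Finset.subset_union_right)
        ((freeTr_transQF φ (c+1) (c+2)).trans Finset.subset_union_left)

lemma transQF_sat {T : Set (ℕ → X → Bool)} (Θ : ℕ → Option ↥T) :
    ∀ (φ : LTL (X × ℕ)) (i c : ℕ) (te : ℕ → ℕ) (pe : ℕ → ℕ → X → Bool),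
      i < c →
      (∀ π ∈ φ.tvars, ∃ τ : ↥T, Θ π = some τ ∧ pe π = τ.1) →
      (TIn.Sat te pe (transQF φ i c) ↔ HSatQF Θ (te i) φ)
  | .atom p, i, c, te, pe, hic, h => by
      obtain ⟨τ, hΘ, hpe⟩ := h p.2 (by simp [LTL.tvars])
      simp only [transQF, sat_atomT, HSatQF]
      constructor
      · intro hs; exact ⟨τ, hΘ, by rw [← hpe]; exact hs⟩
      · rintro ⟨τ', h1, h2⟩
        rw [hΘ] at h1
        rw [hpe, Option.some_inj.mp h1]
        exact h2
  | .not φ, i, c, te, pe, hic, h => by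
      simp only [transQF, sat_not, HSatQF]
      rw [transQF_sat Θ φ i c te pe hic h]
  | .or φ ψ, i, c, te, pe, hic, h => by
      simp only [LTL.tvars, Finset.mem_union] at h
      simp only [transQF, sat_or, HSatQF]
      rw [transQF_sat Θ φ i c te pe hic (fun π hπ => h π (Or.inl hπ)),
          transQF_sat Θ ψ i c te pe hic (fun π hπ => h π (Or.inr hπ))]
  | .next φ, i, c, te, pe, hic, h => by
      have e1 : ∀ m, Function.update te c m i = te i :=
        fun m => Function.update_of_ne (by omega) _ _
      have e2 : ∀ m k, Function.update (Function.update te c m) (c+1) k i = te i :=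
        fun m k => by
          rw [Function.update_of_ne (by omega : i ≠ c+1), e1]
      have e3 : ∀ m k, Function.update (Function.update te c m) (c+1) k c = m :=
        fun m k => by
          rw [Function.update_of_ne (by omega : c ≠ c+1), Function.update_self]
      have key : ∀ m : ℕ,
          TIn.Sat (Function.update te c m) pe (transQF φ c (c+2)) ↔ HSatQF Θ m φ := by
        intro m
        have := transQF_sat Θ φ c (c+2) (Function.update te c m) pe (by omega) h
        rwa [Function.update_self] at this
      have hS : ∀ m : ℕ,
          TIn.Sat (Function.update te c m) pe (tand (.lt i c)
            (.allT (c+1) (.not (tand (.lt i (c+1)) (.lt (c+1) c))))) ↔ m = te i + 1 := by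
        intro m
        simp only [sat_tand, sat_lt, sat_allT, sat_not, e1, e2, e3, Function.update_self]
        constructor
        · rintro ⟨h1, h2⟩
          have := h2 (te i + 1)
          omega
        · rintro rfl
          exact ⟨by omega, fun k => by omega⟩
      simp only [transQF, sat_allT, sat_or, sat_not, hS, key, HSatQF]
      constructor
      · intro H
        rcases H (te i + 1) with hb | hg
        · exact absurd rfl hb
        · exact hg
      · intro H m
        by_cases hm : m = te i + 1
        · subst hm; exact Or.inr H
        · exact Or.inl hm
  | .untl φ ψ, i, c, te, pe, hic, h => by
      simp only [LTL.tvars, Finset.mem_union] at h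
      have e1 : ∀ m, Function.update te c m i = te i :=
        fun m => Function.update_of_ne (by omega) _ _
      have e2 : ∀ m k, Function.update (Function.update te c m) (c+1) k i = te i :=
        fun m k => by
          rw [Function.update_of_ne (by omega : i ≠ c+1), e1]
      have e3 : ∀ m k, Function.update (Function.update te c m) (c+1) k c = m :=
        fun m k => by
          rw [Function.update_of_ne (by omega : c ≠ c+1), Function.update_self]
      have keyψ : ∀ m : ℕ,
          TIn.Sat (Function.update te c m) pe (transQF ψ c (c+2)) ↔ HSatQF Θ m ψ := by
        intro m
        have := transQF_sat Θ ψ c (c+2) (Function.update te c m) pe (by omega)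
          (fun π hπ => h π (Or.inr hπ))
        rwa [Function.update_self] at this
      have keyφ : ∀ m m' : ℕ,
          TIn.Sat (Function.update (Function.update te c m) (c+1) m') pe
            (transQF φ (c+1) (c+2)) ↔ HSatQF Θ m' φ := by
        intro m m'
        have := transQF_sat Θ φ (c+1) (c+2)
          (Function.update (Function.update te c m) (c+1) m') pe (by omega)
          (fun π hπ => h π (Or.inl hπ))
        rwa [Function.update_self] at this
      have hbody : ∀ m : ℕ,
          TIn.Sat (Function.update te c m) pe (tand (tle i c)
            (tand (transQF ψ c (c+2))
              (.allT (c+1) (.or (.not (tand (tle i (c+1)) (.lt (c+1) c)))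
                (transQF φ (c+1) (c+2))))))
          ↔ (te i ≤ m ∧ HSatQF Θ m ψ ∧
              ∀ m', te i ≤ m' → m' < m → HSatQF Θ m' φ) := by
        intro m
        simp only [sat_tand, sat_tle, sat_allT, sat_or, sat_not, sat_lt, e1, e2, e3,
          Function.update_self, keyψ, keyφ]
        constructor
        · rintro ⟨h1, h2, h3⟩
          refine ⟨h1, h2, fun m' hle hlt => ?_⟩
          rcases h3 m' with hb | hg
          · exact absurd ⟨hle, hlt⟩ hb
          · exact hg
        · rintro ⟨h1, h2, h3⟩
          refine ⟨h1, h2, fun m' => ?_⟩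
          by_cases hm : te i ≤ m' ∧ m' < m
          · exact Or.inr (h3 m' hm.1 hm.2)
          · exact Or.inl hm
      simp only [transQF, sat_not, sat_allT, hbody, HSatQF, not_forall, not_not]

/-- translation of a HyperLTL sentence -/
def transH : HyperLTL X → TPr X
  | .ex π ψ => .not (.allTr π (.not (transH ψ)))
  | .all π ψ => .allTr π (transH ψ)
  | .qf φ => .inner (.allT 0 (.or (.not (.allT 1 (.not (.lt 1 0)))) (transQF φ 0 2)))

lemma freeTime_transH : ∀ ψ : HyperLTL X, (transH ψ).freeTime = ∅
  | .ex π ψ => by simp [transH, TPr.freeTime, freeTime_transH ψ]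
  | .all π ψ => by simp [transH, TPr.freeTime, freeTime_transH ψ]
  | .qf φ => by
      simp only [transH, TPr.freeTime, TIn.freeTime]
      rw [Finset.eq_empty_iff_forall_notMem]
      intro x hx
      have H := freeTime_transQF φ 0 2 (by omega)
      simp only [Finset.mem_erase, Finset.mem_union, Finset.mem_insert,
        Finset.mem_singleton] at hx
      obtain ⟨hne, hx⟩ := hx
      rcases hx with hx | hx
      · obtain ⟨h1, h2⟩ := hx
        rcases h2 with h2 | h2 <;> omega
      · have := H hx; simp only [Finset.mem_singleton] at this; omega

lemma freeTr_transH : ∀ ψ : HyperLTL X, (transH ψ).freeTr ⊆ ψ.free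
  | .ex π ψ => by
      simp only [transH, TPr.freeTr, HyperLTL.free]
      exact Finset.erase_subset_erase _ (freeTr_transH ψ)
  | .all π ψ => by
      simp only [transH, TPr.freeTr, HyperLTL.free]
      exact Finset.erase_subset_erase _ (freeTr_transH ψ)
  | .qf φ => by
      simp only [transH, TPr.freeTr, TIn.freeTr, HyperLTL.free, Finset.empty_union]
      exact freeTr_transQF φ 0 2

lemma hsat_ex {T : Set (ℕ → X → Bool)} {Θ : ℕ → Option ↥T} {i π : ℕ} {ψ : HyperLTL X} :
    HSat Θ i (.ex π ψ) ↔ ∃ τ : ↥T, HSat (Function.update Θ π (some τ)) i ψ := Iff.rfl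
lemma hsat_all {T : Set (ℕ → X → Bool)} {Θ : ℕ → Option ↥T} {i π : ℕ} {ψ : HyperLTL X} :
    HSat Θ i (.all π ψ) ↔ ∀ τ : ↥T, HSat (Function.update Θ π (some τ)) i ψ := Iff.rfl
lemma hsat_qf {T : Set (ℕ → X → Bool)} {Θ : ℕ → Option ↥T} {i : ℕ} {φ : LTL (X × ℕ)} :
    HSat Θ i (.qf φ) ↔ HSatQF Θ i φ := Iff.rfl

lemma transH_sat {T : Set (ℕ → X → Bool)} :
    ∀ (ψ : HyperLTL X) (Θ : ℕ → Option ↥T) (te : ℕ → ℕ) (pe : ℕ → ℕ → X → Bool),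
      (∀ π ∈ ψ.free, ∃ τ : ↥T, Θ π = some τ ∧ pe π = τ.1) →
      (TPr.Sat T te pe (transH ψ) ↔ HSat Θ 0 ψ)
  | .ex π ψ, Θ, te, pe, h => by
      have cond : ∀ (τ : ↥T), ∀ π' ∈ ψ.free,
          ∃ τ' : ↥T, Function.update Θ π (some τ) π' = some τ' ∧
            Function.update pe π τ.1 π' = τ'.1 := by
        intro τ π' hπ'
        by_cases hp : π' = π
        · subst hp; exact ⟨τ, by simp⟩
        · obtain ⟨τ', h1, h2⟩ := h π' (by
            simp only [HyperLTL.free, Finset.mem_erase]; exact ⟨hp, hπ'⟩)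
          exact ⟨τ', by simp [Function.update_of_ne hp, h1, h2]⟩
      simp only [transH, satP_not, satP_allTr, hsat_ex]
      constructor
      · intro H
        by_contra hno
        apply H
        intro τ hτ hs
        exact hno ⟨⟨τ, hτ⟩, (transH_sat ψ _ te _ (cond ⟨τ, hτ⟩)).mp hs⟩
      · rintro ⟨τ, hs⟩ H
        exact H τ.1 τ.2 ((transH_sat ψ _ te _ (cond τ)).mpr hs)
  | .all π ψ, Θ, te, pe, h => by
      have cond : ∀ (τ : ↥T), ∀ π' ∈ ψ.free,
          ∃ τ' : ↥T, Function.update Θ π (some τ) π' = some τ' ∧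
            Function.update pe π τ.1 π' = τ'.1 := by
        intro τ π' hπ'
        by_cases hp : π' = π
        · subst hp; exact ⟨τ, by simp⟩
        · obtain ⟨τ', h1, h2⟩ := h π' (by
            simp only [HyperLTL.free, Finset.mem_erase]; exact ⟨hp, hπ'⟩)
          exact ⟨τ', by simp [Function.update_of_ne hp, h1, h2]⟩
      simp only [transH, satP_allTr, hsat_all]
      constructor
      · intro H τ
        exact (transH_sat ψ _ te _ (cond τ)).mp (H τ.1 τ.2)
      · intro H τ hτ
        exact (transH_sat ψ _ te _ (cond ⟨τ, hτ⟩)).mpr (H ⟨τ, hτ⟩)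
  | .qf φ, Θ, te, pe, h => by
      simp only [HyperLTL.free] at h
      have key : ∀ m : ℕ,
          TIn.Sat (Function.update te 0 m) pe (transQF φ 0 2) ↔ HSatQF Θ m φ := by
        intro m
        have := transQF_sat Θ φ 0 2 (Function.update te 0 m) pe (by omega) h
        rwa [Function.update_self] at this
      have zc : ∀ m : ℕ,
          TIn.Sat (Function.update te 0 m) pe ((.allT 1 (.not (.lt 1 0))) : TIn X)
            ↔ m = 0 := by
        intro m
        simp only [sat_allT, sat_not, sat_lt]
        constructor
        · intro H
          have := H 0
          rw [Function.update_self, Function.update_of_ne (by omega : (0:ℕ) ≠ 1),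
            Function.update_self] at this
          omega
        · rintro rfl k
          rw [Function.update_self, Function.update_of_ne (by omega : (0:ℕ) ≠ 1),
            Function.update_self]
          omega
      simp only [transH, satP_inner, sat_allT, sat_or, sat_not, zc, key, hsat_qf]
      constructor
      · intro H
        rcases H 0 with hb | hg
        · exact absurd rfl hb
        · exact hg
      · intro H m
        by_cases hm : m = 0
        · subst hm; exact Or.inr H
        · exact Or.inl hm

end Translation

/-- For every HyperLTL sentence `ψ` over a finite alphabet `X` there
exists a trace-prefixed hypertrace sentence `φ` over `X` such that for every set `T`
of infinite traces over `X`: `T ⊨_H ψ` iff `T ⊨ φ`. -/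
theorem hyperLTL_to_tracePrefixed
    {X : Type} [Finite X] (ψ : HyperLTL X) (hψ : ψ.Closed) :
    ∃ φ : TPr X, φ.Closed ∧
      ∀ T : Set (ℕ → X → Bool), HModels T ψ ↔ TPr.Models T φ := by
  refine ⟨transH ψ, ⟨freeTime_transH ψ, ?_⟩, ?_⟩
  · have := freeTr_transH ψ
    rw [hψ] at this
    exact Finset.subset_empty.mp this
  · intro T
    have key : ∀ (te : ℕ → ℕ) (pe : ℕ → ℕ → X → Bool),
        TPr.Sat T te pe (transH ψ) ↔ HSat (T := T) (fun _ => none) 0 ψ := by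
      intro te pe
      apply transH_sat
      intro π hπ
      rw [hψ] at hπ
      exact absurd hπ (Finset.notMem_empty π)
    exact ⟨fun H te pe => (key te pe).mpr H,
      fun H => (key (fun _ => 0) (fun _ _ _ => false)).mp (H _ _)⟩
end

section
/- Let C be a class of LTL formulas and ≈_C an equivalence on traces for C. Let φ be a HyperLTL formula (possibly with free trace variables) in the class 2^C, let V(φ) be the set of trace variables occurring in φ, and let T and T' be sets of infinite traces that are (|V(φ)|, C)-equivalent. Then for every bijection f : T → T' witnessing the equivalence and all trace assignments Π over T and Π' over T' whose domains are exactly the set of free trace variables of φ: (Π,0) ⊨ φ iff (f∘Π, 0) ⊨ φ, and (Π',0) ⊨ φ iff (f⁻¹∘Π', 0) ⊨ φ. -/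
/-- All trace variables occurring in a HyperLTL formula. -/
def HyperLTL.vars {X : Type} : HyperLTL X → Finset ℕ
  | .ex π ψ  => insert π ψ.vars
  | .all π ψ => insert π ψ.vars
  | .qf φ    => φ.tvars

/-- Flattening of a trace assignment: an infinite trace over the alphabet `X × ℕ`
(`false` on pairs `(a, π)` with `π` outside the domain of the assignment). -/
def flat {X : Type} {T : Set (ℕ → X → Bool)} (Θ : ℕ → Option ↥T) : ℕ → (X × ℕ) → Bool :=
  fun i p => ((Θ p.2).map (fun τ => τ.1 i p.1)).getD false

/-- The domain of the assignment consists of exactly `k` trace variables. -/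
def HasDomCard {X : Type} {T : Set (ℕ → X → Bool)} (Θ : ℕ → Option ↥T) (k : ℕ) : Prop :=
  ∃ s : Finset ℕ, (∀ π, (Θ π).isSome ↔ π ∈ s) ∧ s.card = k

/-- Composition `f ∘ Θ` of a bijection `f : T → T'` with an assignment over `T`. -/
def mapAssign {X : Type} {T T' : Set (ℕ → X → Bool)} (f : ↥T ≃ ↥T') (Θ : ℕ → Option ↥T) :
    ℕ → Option ↥T' := fun π => (Θ π).map f

/-- `R` is an equivalence on traces for the class `C` of LTL formulas: an equivalence
relation such that `R`-related traces satisfy exactly the same formulas of `C`. -/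
def EquivOnTracesFor {A : Type} (C : Set (LTL A))
    (R : (ℕ → A → Bool) → (ℕ → A → Bool) → Prop) : Prop :=
  Equivalence R ∧ ∀ φ ∈ C, ∀ τ τ', R τ τ' → (LTL.Sat τ φ ↔ LTL.Sat τ' φ)

/-- The bijection `f : T → T'` witnesses that `T` and `T'` are `(k, C)`-equivalent
(w.r.t. the trace equivalence `R`). -/
def KCEquivWith {X : Type}
    (R : (ℕ → (X × ℕ) → Bool) → (ℕ → (X × ℕ) → Bool) → Prop) (k : ℕ)
    (T T' : Set (ℕ → X → Bool)) (f : ↥T ≃ ↥T') : Prop :=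
  (∀ Θ : ℕ → Option ↥T, HasDomCard Θ k → R (flat Θ) (flat (mapAssign f Θ))) ∧
  (∀ Θ' : ℕ → Option ↥T', HasDomCard Θ' k → R (flat Θ') (flat (mapAssign f.symm Θ')))

/-- A HyperLTL formula `Q₁π₁…Qₙπₙ.φ` lies in the class `2^C` iff its quantifier-free
part `φ`, read as an LTL formula over the alphabet `X × ℕ`, belongs to `C`. -/
def HyperLTL.InClass {X : Type} (C : Set (LTL (X × ℕ))) : HyperLTL X → Prop
  | .ex _ ψ  => ψ.InClass C
  | .all _ ψ => ψ.InClass C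
  | .qf φ    => φ ∈ C

lemma LTL.sat_congr {A : Type} {τ τ' : ℕ → A → Bool} (χ : LTL A) (h : τ = τ') :
    LTL.Sat τ χ ↔ LTL.Sat τ' χ := by rw [h]

lemma hsatqf_iff_sat {X : Type} {T : Set (ℕ → X → Bool)} (Θ : ℕ → Option ↥T)
    (χ : LTL (X × ℕ)) (i : ℕ) :
    HSatQF Θ i χ ↔ LTL.Sat (fun n => flat Θ (n + i)) χ := by
  induction χ generalizing i with
  | atom p =>
    simp only [HSatQF, LTL.Sat, flat]
    cases h : Θ p.2 with
    | none => simp [h]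
    | some τ => simp [h]
  | not χ ih => simp [HSatQF, LTL.Sat, ih]
  | or χ₁ χ₂ ih₁ ih₂ => simp [HSatQF, LTL.Sat, ih₁, ih₂]
  | next χ ih =>
    simp only [HSatQF, LTL.Sat, ih]
    exact LTL.sat_congr χ (by funext n; beta_reduce; exact congrArg _ (by omega))
  | untl χ₁ χ₂ ih₁ ih₂ =>
    simp only [HSatQF, LTL.Sat, ih₁, ih₂]
    constructor
    · rintro ⟨j, hij, h₂, h₁⟩
      refine ⟨j - i, ?_, ?_⟩
      · exact ((LTL.sat_congr χ₂ (by funext n; beta_reduce; exact congrArg _ (by omega))).mp h₂)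
      · intro j' hj'
        exact (LTL.sat_congr χ₁ (by funext n; beta_reduce; exact congrArg _ (by omega))).mp (h₁ (j' + i) (by omega) (by omega))
    · rintro ⟨j, h₂, h₁⟩
      refine ⟨j + i, by omega, ?_, ?_⟩
      · exact (LTL.sat_congr χ₂ (by funext n; beta_reduce; exact congrArg _ (by omega))).mp h₂
      · intro j' hij' hj'
        exact (LTL.sat_congr χ₁ (by funext n; beta_reduce; exact congrArg _ (by omega))).mp (h₁ (j' - i) (by omega))

lemma hyperLTL_free_subset_vars {X : Type} (ψ : HyperLTL X) : ψ.free ⊆ ψ.vars := by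
  induction ψ with
  | ex π ψ ih =>
    exact (Finset.erase_subset π ψ.free).trans (ih.trans (Finset.subset_insert π ψ.vars))
  | all π ψ ih =>
    exact (Finset.erase_subset π ψ.free).trans (ih.trans (Finset.subset_insert π ψ.vars))
  | qf χ => exact fun _ h => h

lemma update_mapAssign {X : Type} {T T' : Set (ℕ → X → Bool)} (g : ↥T ≃ ↥T')
    (Θ : ℕ → Option ↥T) (π : ℕ) (τ : ↥T) :
    Function.update (mapAssign g Θ) π (some (g τ)) = mapAssign g (Function.update Θ π (some τ)) := by
  funext π'
  by_cases h : π' = π <;> simp [Function.update, h, mapAssign]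

lemma aux_main {X : Type} (C : Set (LTL (X × ℕ)))
    (R : (ℕ → (X × ℕ) → Bool) → (ℕ → (X × ℕ) → Bool) → Prop)
    (hR : EquivOnTracesFor C R) (k : ℕ)
    {T T' : Set (ℕ → X → Bool)} (g : ↥T ≃ ↥T')
    (hg : ∀ Θ : ℕ → Option ↥T, HasDomCard Θ k → R (flat Θ) (flat (mapAssign g Θ)))
    (V : Finset ℕ) (hV : V.card = k) :
    ∀ ψ : HyperLTL X, ψ.InClass C → ∀ s : Finset ℕ, ψ.free ⊆ s → s ∪ ψ.vars = V →
      ∀ Θ : ℕ → Option ↥T, (∀ π, (Θ π).isSome ↔ π ∈ s) →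
      (HSat Θ 0 ψ ↔ HSat (mapAssign g Θ) 0 ψ) := by
  intro ψ
  induction ψ with
  | ex π ψ ih =>
    intro hC s hfree hV' Θ hdom
    have hfree' : ψ.free ⊆ insert π s := by
      intro x hx
      by_cases hxπ : x = π
      · simp [hxπ]
      · exact Finset.mem_insert_of_mem (hfree (Finset.mem_erase.mpr ⟨hxπ, hx⟩))
    have hV'' : insert π s ∪ ψ.vars = V := by
      rw [Finset.insert_union, ← Finset.union_insert]; exact hV'
    simp only [HSat]
    constructor
    · rintro ⟨τ, h⟩
      refine ⟨g τ, ?_⟩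
      rw [update_mapAssign]
      refine (ih hC (insert π s) hfree' hV'' _ ?_).mp h
      intro π'
      by_cases hπ : π' = π <;> simp [Function.update, hπ, hdom π']
    · rintro ⟨τ', h⟩
      refine ⟨g.symm τ', ?_⟩
      rw [show τ' = g (g.symm τ') by simp] at h
      rw [update_mapAssign] at h
      refine (ih hC (insert π s) hfree' hV'' _ ?_).mpr h
      intro π'
      by_cases hπ : π' = π <;> simp [Function.update, hπ, hdom π']
  | all π ψ ih =>
    intro hC s hfree hV' Θ hdom
    have hfree' : ψ.free ⊆ insert π s := by
      intro x hx
      by_cases hxπ : x = π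
      · simp [hxπ]
      · exact Finset.mem_insert_of_mem (hfree (Finset.mem_erase.mpr ⟨hxπ, hx⟩))
    have hV'' : insert π s ∪ ψ.vars = V := by
      rw [Finset.insert_union, ← Finset.union_insert]; exact hV'
    simp only [HSat]
    constructor
    · intro h τ'
      have := h (g.symm τ')
      rw [show τ' = g (g.symm τ') by simp, update_mapAssign]
      refine (ih hC (insert π s) hfree' hV'' _ ?_).mp this
      intro π'
      by_cases hπ : π' = π <;> simp [Function.update, hπ, hdom π']
    · intro h τ
      have := h (g τ)
      rw [update_mapAssign] at this
      refine (ih hC (insert π s) hfree' hV'' _ ?_).mpr this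
      intro π'
      by_cases hπ : π' = π <;> simp [Function.update, hπ, hdom π']
  | qf χ =>
    intro hC s hfree hV' Θ hdom
    have hsV : s = V := by
      rw [← hV']
      have : HyperLTL.vars (HyperLTL.qf (X := X) χ) ⊆ s := hfree
      rw [Finset.union_eq_left.mpr this]
    simp only [HSat]
    rw [hsatqf_iff_sat, hsatqf_iff_sat]
    have h1 : (fun n => flat Θ (n + 0)) = flat Θ := by funext n; simp
    have h2 : (fun n => flat (mapAssign g Θ) (n + 0)) = flat (mapAssign g Θ) := by
      funext n; simp
    rw [h1, h2]
    exact hR.2 χ hC _ _ (hg Θ ⟨s, hdom, by rw [hsV, hV]⟩)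

/-- Lemma on open formulas. Let `C` be a class of LTL formulas and `R`
an equivalence on traces for `C`. Let `φ ∈ 2^C` (possibly with free trace variables) and
let `T ≈_(|V(φ)|,C) T'` be witnessed by the bijection `f`. Then for all trace assignments
`Θ` over `T` and `Θ'` over `T'` whose domains are exactly the free trace variables of `φ`:
`(Θ,0) ⊨ φ ↔ (f∘Θ,0) ⊨ φ` and `(Θ',0) ⊨ φ ↔ (f⁻¹∘Θ',0) ⊨ φ`. -/
theorem kcEquiv_preserves_open_hyperLTL
    {X : Type} [Finite X] (C : Set (LTL (X × ℕ)))
    (R : (ℕ → (X × ℕ) → Bool) → (ℕ → (X × ℕ) → Bool) → Prop)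
    (hR : EquivOnTracesFor C R)
    (φ : HyperLTL X) (hφ : φ.InClass C)
    (T T' : Set (ℕ → X → Bool)) (f : ↥T ≃ ↥T')
    (hf : KCEquivWith R φ.vars.card T T' f)
    (Θ : ℕ → Option ↥T) (Θ' : ℕ → Option ↥T')
    (hΘ : ∀ π, (Θ π).isSome ↔ π ∈ φ.free)
    (hΘ' : ∀ π, (Θ' π).isSome ↔ π ∈ φ.free) :
    (HSat Θ 0 φ ↔ HSat (mapAssign f Θ) 0 φ) ∧
    (HSat Θ' 0 φ ↔ HSat (mapAssign f.symm Θ') 0 φ) := by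
  constructor
  · exact aux_main C R hR φ.vars.card f hf.1 φ.vars rfl φ hφ φ.free
      (fun _ h => h) (Finset.union_eq_right.mpr (hyperLTL_free_subset_vars φ)) Θ hΘ
  · exact aux_main C R hR φ.vars.card f.symm hf.2 φ.vars rfl φ hφ φ.free
      (fun _ h => h) (Finset.union_eq_right.mpr (hyperLTL_free_subset_vars φ)) Θ' hΘ'
end

section
/- For all infinite traces τ and τ' over a finite alphabet X: {τ(i) : i ∈ ℕ} = {τ'(j) : j ∈ ℕ} if and only if for every LTL formula φ in the class 𝔾, τ ⊨ φ iff τ' ⊨ φ. -/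
/-- Propositional LTL formulas: no temporal operators. -/
def LTL.Propositional {A : Type} : LTL A → Prop
  | .atom _   => True
  | .not φ    => φ.Propositional
  | .or φ ψ   => φ.Propositional ∧ ψ.Propositional
  | .next _   => False
  | .untl _ _ => False

/-- A tautology `⊤` (written `a ∨ ¬a` for an atom `a`). -/
def ltlTop {A : Type} (a : A) : LTL A := .or (.atom a) (.not (.atom a))

/-- `G φ`, abbreviating `¬(⊤ U ¬φ)`. -/
def ltlG {A : Type} (a : A) (φ : LTL A) : LTL A := .not (.untl (ltlTop a) (.not φ))

/-- The class `𝔾` of LTL formulas `G ψ` with `ψ` propositional. -/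
def GClass (A : Type) : Set (LTL A) := {φ | ∃ a ψ, LTL.Propositional ψ ∧ φ = ltlG a ψ}

section Aux
variable {A : Type}

lemma sat_top (τ : ℕ → A → Bool) (a : A) : LTL.Sat τ (ltlTop a) := by
  simp [ltlTop, LTL.Sat]

lemma sat_prop_congr (ψ : LTL A) (h : ψ.Propositional) :
    ∀ (τ τ' : ℕ → A → Bool), τ 0 = τ' 0 → (LTL.Sat τ ψ ↔ LTL.Sat τ' ψ) := by
  induction ψ with
  | atom a => intro τ τ' h0; simp [LTL.Sat, h0]
  | not φ ih => intro τ τ' h0; exact not_congr (ih h _ _ h0)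
  | or φ ψ ih1 ih2 => intro τ τ' h0; exact or_congr (ih1 h.1 _ _ h0) (ih2 h.2 _ _ h0)
  | next φ _ => exact h.elim
  | untl φ ψ _ _ => exact h.elim

lemma sat_G (a : A) (ψ : LTL A) (h : ψ.Propositional) (τ : ℕ → A → Bool) :
    LTL.Sat τ (ltlG a ψ) ↔ ∀ j, LTL.Sat (fun _ => τ j) ψ := by
  have h0 : ∀ j, (fun n => τ (n + j)) 0 = (fun _ : ℕ => τ j) 0 := fun j => by simp
  show (¬ ∃ j, (¬ LTL.Sat (fun n => τ (n + j)) ψ) ∧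
      ∀ j' < j, LTL.Sat (fun n => τ (n + j')) (ltlTop a)) ↔ _
  constructor
  · intro H j
    by_contra hc
    exact H ⟨j, fun hs => hc ((sat_prop_congr ψ h _ _ (h0 j)).mp hs),
      fun j' _ => sat_top _ a⟩
  · rintro H ⟨j, hne, -⟩
    exact hne ((sat_prop_congr ψ h _ _ (h0 j)).mpr (H j))

def land (φ ψ : LTL A) : LTL A := .not (.or (.not φ) (.not ψ))

lemma sat_land {τ : ℕ → A → Bool} {φ ψ : LTL A} :
    LTL.Sat τ (land φ ψ) ↔ LTL.Sat τ φ ∧ LTL.Sat τ ψ := by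
  simp [land, LTL.Sat]

def conj (a : A) : List (LTL A) → LTL A
  | [] => ltlTop a
  | φ :: l => land φ (conj a l)

lemma sat_conj (a : A) (τ : ℕ → A → Bool) :
    ∀ l : List (LTL A), LTL.Sat τ (conj a l) ↔ ∀ φ ∈ l, LTL.Sat τ φ
  | [] => by simpa [conj] using sat_top τ a
  | φ :: l => by
    simp [conj, sat_land, sat_conj a τ l]

lemma prop_conj (a : A) : ∀ l : List (LTL A), (∀ φ ∈ l, φ.Propositional) →
    (conj a l).Propositional
  | [], _ => by simp [conj, ltlTop, LTL.Propositional]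
  | φ :: l, h => by
    have := prop_conj a l (fun ψ hψ => h ψ (List.mem_cons_of_mem _ hψ))
    simp_all [conj, land, LTL.Propositional]

variable {X : Type} [Fintype X]

def lit (v : X → Bool) (x : X) : LTL X := if v x then .atom x else .not (.atom x)

lemma sat_lit (τ : ℕ → X → Bool) (v : X → Bool) (x : X) :
    LTL.Sat τ (lit v x) ↔ τ 0 x = v x := by
  cases h : v x <;> simp [lit, h, LTL.Sat]

lemma prop_lit (v : X → Bool) (x : X) : (lit v x).Propositional := by
  cases h : v x <;> simp [lit, h, LTL.Propositional]

noncomputable def chi (a : X) (v : X → Bool) : LTL X :=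
  conj a (Finset.univ.toList.map (lit v))

lemma prop_chi (a : X) (v : X → Bool) : (chi a v).Propositional := by
  apply prop_conj
  intro φ hφ
  simp only [List.mem_map] at hφ
  obtain ⟨x, _, rfl⟩ := hφ
  exact prop_lit v x

lemma sat_chi (a : X) (τ : ℕ → X → Bool) (v : X → Bool) :
    LTL.Sat τ (chi a v) ↔ τ 0 = v := by
  rw [chi, sat_conj, funext_iff]
  constructor
  · intro H x
    have := H (lit v x) (List.mem_map_of_mem (by simp))
    exact (sat_lit τ v x).mp this
  · intro H φ hφ
    simp only [List.mem_map] at hφ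
    obtain ⟨x, _, rfl⟩ := hφ
    exact (sat_lit τ v x).mpr (H x)

end Aux

/-- For all infinite traces `τ` and `τ'` over a finite alphabet `X`:
`{τ(i) : i ∈ ℕ} = {τ'(j) : j ∈ ℕ}` iff `τ` and `τ'` satisfy exactly the same
LTL formulas of the class `𝔾`. -/
theorem sameValuations_iff_GClass_equiv
    {X : Type} [Finite X] (τ τ' : ℕ → X → Bool) :
    Set.range τ = Set.range τ' ↔ ∀ φ ∈ GClass X, (LTL.Sat τ φ ↔ LTL.Sat τ' φ) := by
  have key : ∀ (a : X) (ψ : LTL X), ψ.Propositional → ∀ σ : ℕ → X → Bool,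
      (LTL.Sat σ (ltlG a ψ) ↔ ∀ v ∈ Set.range σ, LTL.Sat (fun _ => v) ψ) := by
    intro a ψ h σ
    rw [sat_G a ψ h]
    constructor
    · rintro H v ⟨j, rfl⟩; exact H j
    · intro H j; exact H (σ j) ⟨j, rfl⟩
  constructor
  · intro hr φ hφ
    obtain ⟨a, ψ, hψ, rfl⟩ := hφ
    rw [key a ψ hψ τ, key a ψ hψ τ', hr]
  · intro H
    cases isEmpty_or_nonempty X with
    | inl hE =>
      have huniq : ∀ f g : X → Bool, f = g := fun f g =>
        funext fun x => (hE.false x).elim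
      ext v
      constructor
      · rintro ⟨i, rfl⟩; exact ⟨0, huniq _ _⟩
      · rintro ⟨i, rfl⟩; exact ⟨0, huniq _ _⟩
    | inr hN =>
      obtain ⟨a⟩ := hN
      have : Fintype X := Fintype.ofFinite X
      have main : ∀ (σ σ' : ℕ → X → Bool),
          (∀ φ ∈ GClass X, LTL.Sat σ φ ↔ LTL.Sat σ' φ) →
          Set.range σ ⊆ Set.range σ' := by
        intro σ σ' Hs v hv
        by_contra hv'
        obtain ⟨j, rfl⟩ := hv
        set v := σ j with hvdef
        have hmem : ltlG a (.not (chi a v)) ∈ GClass X :=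
          ⟨a, .not (chi a v), prop_chi a v, rfl⟩
        have hprop : (LTL.not (chi a v)).Propositional := prop_chi a v
        have h1 : LTL.Sat σ' (ltlG a (.not (chi a v))) := by
          rw [sat_G a _ hprop σ']
          intro k
          show ¬ LTL.Sat (fun _ => σ' k) (chi a v)
          rw [sat_chi]
          intro hc
          exact hv' ⟨k, hc⟩
        have h2 : ¬ LTL.Sat σ (ltlG a (.not (chi a v))) := by
          rw [sat_G a _ hprop σ]
          push_neg
          refine ⟨j, ?_⟩
          show ¬ ¬ LTL.Sat (fun _ => σ j) (chi a v)
          rw [not_not, sat_chi]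
        exact h2 ((Hs _ hmem).mpr h1)
      exact Set.Subset.antisymm (main τ τ' H)
        (main τ' τ (fun φ hφ => (H φ hφ).symm))
end

section
/- For every time-prefixed hypertrace sentence φ over a finite alphabet X, letting k be the number of time variables occurring in φ, and for all sets of infinite traces T and T' over X that are k-point equivalent: T ⊨ φ if and only if T' ⊨ φ. -/
/-- Trace-part of time-prefixed hypertrace formulas:
`ψ ::= ∀π.ψ | ψ∨ψ | ¬ψ | a(π,i)` (trace and time variables are naturals). -/
inductive TrIn (X : Type) : Type where
  | allTr : ℕ → TrIn X → TrIn X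
  | or    : TrIn X → TrIn X → TrIn X
  | not   : TrIn X → TrIn X
  | atom  : X → ℕ → ℕ → TrIn X

/-- Time-prefixed hypertrace formulas: `φ ::= ∀i.φ | ¬φ | i<i' | i=i' | φ∨φ | ψ`. -/
inductive TimeP (X : Type) : Type where
  | allTime : ℕ → TimeP X → TimeP X
  | not     : TimeP X → TimeP X
  | lt      : ℕ → ℕ → TimeP X
  | eq      : ℕ → ℕ → TimeP X
  | or      : TimeP X → TimeP X → TimeP X
  | inner   : TrIn X → TimeP X

/-- Satisfaction of the trace part, with time environment `te` and trace environment
`pe`; trace quantifiers range over `T`. -/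
def TrIn.Sat {X : Type} (T : Set (ℕ → X → Bool)) (te : ℕ → ℕ) :
    (ℕ → (ℕ → X → Bool)) → TrIn X → Prop
  | pe, .allTr π ψ   => ∀ τ ∈ T, TrIn.Sat T te (Function.update pe π τ) ψ
  | pe, .or ψ₁ ψ₂    => TrIn.Sat T te pe ψ₁ ∨ TrIn.Sat T te pe ψ₂
  | pe, .not ψ       => ¬ TrIn.Sat T te pe ψ
  | pe, .atom a π i  => pe π (te i) a = true

/-- Satisfaction of a time-prefixed formula; time quantifiers range over `ℕ`. -/
def TimeP.Sat {X : Type} (T : Set (ℕ → X → Bool)) :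
    (ℕ → ℕ) → (ℕ → (ℕ → X → Bool)) → TimeP X → Prop
  | te, pe, .allTime i φ => ∀ n : ℕ, TimeP.Sat T (Function.update te i n) pe φ
  | te, pe, .not φ       => ¬ TimeP.Sat T te pe φ
  | te, _,  .lt i j      => te i < te j
  | te, _,  .eq i j      => te i = te j
  | te, pe, .or φ₁ φ₂    => TimeP.Sat T te pe φ₁ ∨ TimeP.Sat T te pe φ₂
  | te, pe, .inner ψ     => TrIn.Sat T te pe ψ

/-- Time variables occurring in the trace part. -/
def TrIn.timeVars {X : Type} : TrIn X → Finset ℕ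
  | .allTr _ ψ  => ψ.timeVars
  | .or ψ₁ ψ₂   => ψ₁.timeVars ∪ ψ₂.timeVars
  | .not ψ      => ψ.timeVars
  | .atom _ _ i => {i}

/-- Free trace variables of the trace part. -/
def TrIn.freeTr {X : Type} : TrIn X → Finset ℕ
  | .allTr π ψ  => ψ.freeTr.erase π
  | .or ψ₁ ψ₂   => ψ₁.freeTr ∪ ψ₂.freeTr
  | .not ψ      => ψ.freeTr
  | .atom _ π _ => {π}

/-- All time variables occurring in a time-prefixed formula. -/
def TimeP.timeVars {X : Type} : TimeP X → Finset ℕ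
  | .allTime i φ => insert i φ.timeVars
  | .not φ       => φ.timeVars
  | .lt i j      => {i, j}
  | .eq i j      => {i, j}
  | .or φ₁ φ₂    => φ₁.timeVars ∪ φ₂.timeVars
  | .inner ψ     => ψ.timeVars

/-- Free time variables of a time-prefixed formula. -/
def TimeP.freeTime {X : Type} : TimeP X → Finset ℕ
  | .allTime i φ => φ.freeTime.erase i
  | .not φ       => φ.freeTime
  | .lt i j      => {i, j}
  | .eq i j      => {i, j}
  | .or φ₁ φ₂    => φ₁.freeTime ∪ φ₂.freeTime
  | .inner ψ     => ψ.timeVars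

/-- Free trace variables of a time-prefixed formula. -/
def TimeP.freeTr {X : Type} : TimeP X → Finset ℕ
  | .allTime _ φ => φ.freeTr
  | .not φ       => φ.freeTr
  | .lt _ _      => ∅
  | .eq _ _      => ∅
  | .or φ₁ φ₂    => φ₁.freeTr ∪ φ₂.freeTr
  | .inner ψ     => ψ.freeTr

/-- A time-prefixed hypertrace sentence: no free variables of either sort. -/
def TimeP.Closed {X : Type} (φ : TimeP X) : Prop := φ.freeTime = ∅ ∧ φ.freeTr = ∅

/-- `T ⊨ φ` for a (closed) time-prefixed hypertrace formula. -/
def TimeP.Models {X : Type} (T : Set (ℕ → X → Bool)) (φ : TimeP X) : Prop :=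
  ∀ (te : ℕ → ℕ) (pe : ℕ → (ℕ → X → Bool)), TimeP.Sat T te pe φ

/-- `T` and `T'` are `k`-point equivalent: for every `k`-tuple of time positions there
is a bijection between `T` and `T'` preserving the valuations at those positions. -/
def KPointEquiv {X : Type} (k : ℕ) (T T' : Set (ℕ → X → Bool)) : Prop :=
  ∀ idx : Fin k → ℕ, ∃ f : ↥T ≃ ↥T',
    (∀ τ : ↥T, ∀ j : Fin k, τ.1 (idx j) = (f τ).1 (idx j)) ∧
    (∀ τ' : ↥T', ∀ j : Fin k, τ'.1 (idx j) = (f.symm τ').1 (idx j))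

lemma trIn_transfer {X : Type} {T T' : Set (ℕ → X → Bool)} (te : ℕ → ℕ) (V : Finset ℕ)
    (f : ↥T ≃ ↥T')
    (hf : ∀ τ : ↥T, ∀ i ∈ V, τ.1 (te i) = (f τ).1 (te i))
    (hf' : ∀ τ' : ↥T', ∀ i ∈ V, τ'.1 (te i) = (f.symm τ').1 (te i)) :
    ∀ (ψ : TrIn X), ψ.timeVars ⊆ V →
    ∀ pe pe', (∀ π ∈ ψ.freeTr, ∀ i ∈ V, pe π (te i) = pe' π (te i)) →
    (TrIn.Sat T te pe ψ ↔ TrIn.Sat T' te pe' ψ) := by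
  intro ψ
  induction ψ with
  | atom a π i =>
      intro hV pe pe' hpe
      simp only [TrIn.Sat]
      rw [hpe π (by simp [TrIn.freeTr]) i (hV (by simp [TrIn.timeVars]))]
  | not ψ ih =>
      intro hV pe pe' hpe
      simp only [TrIn.Sat]
      exact not_congr (ih hV pe pe' hpe)
  | or ψ₁ ψ₂ ih₁ ih₂ =>
      intro hV pe pe' hpe
      simp only [TrIn.Sat]
      refine or_congr (ih₁ (fun i hi => hV ?_) pe pe' (fun π hπ => hpe π ?_))
        (ih₂ (fun i hi => hV ?_) pe pe' (fun π hπ => hpe π ?_)) <;>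
        simp_all [TrIn.timeVars, TrIn.freeTr]
  | allTr π ψ ih =>
      intro hV pe pe' hpe
      simp only [TrIn.Sat]
      have hV' : ψ.timeVars ⊆ V := hV
      constructor
      · intro hs τ' hτ'
        have := hs (f.symm ⟨τ', hτ'⟩).1 (f.symm ⟨τ', hτ'⟩).2
        refine (ih hV' _ _ ?_).mp this
        intro π' hπ' i hi
        rcases eq_or_ne π' π with rfl | hne
        · simp only [Function.update_self]
          exact (hf' ⟨τ', hτ'⟩ i hi).symm
        · simp only [Function.update_of_ne hne]
          exact hpe π' (Finset.mem_erase.mpr ⟨hne, hπ'⟩) i hi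
      · intro hs τ hτ
        have := hs (f ⟨τ, hτ⟩).1 (f ⟨τ, hτ⟩).2
        refine (ih hV' _ _ ?_).mpr this
        intro π' hπ' i hi
        rcases eq_or_ne π' π with rfl | hne
        · simp only [Function.update_self]
          exact hf ⟨τ, hτ⟩ i hi
        · simp only [Function.update_of_ne hne]
          exact hpe π' (Finset.mem_erase.mpr ⟨hne, hπ'⟩) i hi

lemma timeP_transfer {X : Type} {T T' : Set (ℕ → X → Bool)} (V : Finset ℕ)
    (H : ∀ te : ℕ → ℕ, ∃ f : ↥T ≃ ↥T',
      (∀ τ : ↥T, ∀ i ∈ V, τ.1 (te i) = (f τ).1 (te i)) ∧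
      (∀ τ' : ↥T', ∀ i ∈ V, τ'.1 (te i) = (f.symm τ').1 (te i))) :
    ∀ (φ : TimeP X), φ.timeVars ⊆ V → φ.freeTr = ∅ →
    ∀ te pe pe', (TimeP.Sat T te pe φ ↔ TimeP.Sat T' te pe' φ) := by
  intro φ
  induction φ with
  | allTime i φ ih =>
      intro hV hfr te pe pe'
      simp only [TimeP.Sat]
      refine forall_congr' fun n => ih ?_ hfr _ pe pe'
      exact fun j hj => hV (by simp [TimeP.timeVars, Finset.mem_insert, hj, Or.inr])
  | not φ ih =>
      intro hV hfr te pe pe'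
      simp only [TimeP.Sat]
      exact not_congr (ih hV hfr te pe pe')
  | lt i j => intro _ _ te pe pe'; simp [TimeP.Sat]
  | eq i j => intro _ _ te pe pe'; simp [TimeP.Sat]
  | or φ₁ φ₂ ih₁ ih₂ =>
      intro hV hfr te pe pe'
      simp only [TimeP.freeTr, Finset.union_eq_empty] at hfr
      simp only [TimeP.Sat]
      refine or_congr (ih₁ (fun n hn => hV ?_) hfr.1 te pe pe')
        (ih₂ (fun n hn => hV ?_) hfr.2 te pe pe') <;>
        simp_all [TimeP.timeVars]
  | inner ψ =>
      intro hV hfr te pe pe'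
      obtain ⟨f, hf, hf'⟩ := H te
      simp only [TimeP.Sat]
      exact trIn_transfer te V f hf hf' ψ hV pe pe'
        (by simp_all [TimeP.freeTr])

/-- For every time-prefixed hypertrace sentence `φ` over a finite
alphabet `X`, with `k` the number of time variables occurring in `φ`, and all sets of
infinite traces `T`, `T'` that are `k`-point equivalent: `T ⊨ φ` iff `T' ⊨ φ`. -/
theorem kPointEquiv_preserves_timePrefixed
    {X : Type} [Finite X] (φ : TimeP X) (hφ : φ.Closed)
    (T T' : Set (ℕ → X → Bool)) (h : KPointEquiv φ.timeVars.card T T') :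
    TimeP.Models T φ ↔ TimeP.Models T' φ := by
  have H : ∀ te : ℕ → ℕ, ∃ f : ↥T ≃ ↥T',
      (∀ τ : ↥T, ∀ i ∈ φ.timeVars, τ.1 (te i) = (f τ).1 (te i)) ∧
      (∀ τ' : ↥T', ∀ i ∈ φ.timeVars, τ'.1 (te i) = (f.symm τ').1 (te i)) := by
    intro te
    obtain ⟨f, h1, h2⟩ := h (fun j => te ((φ.timeVars.equivFin.symm j) : ℕ))
    refine ⟨f, ?_, ?_⟩
    · intro τ i hi
      have := h1 τ (φ.timeVars.equivFin ⟨i, hi⟩)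
      simpa using this
    · intro τ' i hi
      have := h2 τ' (φ.timeVars.equivFin ⟨i, hi⟩)
      simpa using this
  have key := timeP_transfer φ.timeVars H φ (le_refl _) hφ.2
  constructor
  · intro hm te pe
    exact (key te pe pe).mp (hm te pe)
  · intro hm te pe
    exact (key te pe pe).mpr (hm te pe)
end
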